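/- arXiv:0711.3353 — 2 statements merged into one kernel-verified Lean document; each statement's English description precedes it below -/
import Mathlib

section
/- For an antichain Γ in the poset Δ⁺ of positive roots of type A_n (n ≥ 2), the OY-number satisfies 𝒴(Γ) = n − 1 if and only if Γ is the set of simple roots with odd indices, Γ = {α_i : i odd, 1 ≤ i ≤ n}, or the set of simple roots with even indices, Γ = {α_i : i even, 1 ≤ i ≤ n}. -/
open Finset

/-- The root order on pairs: `(i,j) ≼ (i',j')` iff `i' ≤ i` and `j ≤ j'`. -/
def rle (p q : ℕ × ℕ) : Prop := q.1 ≤ p.1 ∧ p.2 ≤ q.2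

instance : DecidableRel rle := fun p q =>
  inferInstanceAs (Decidable (q.1 ≤ p.1 ∧ p.2 ≤ q.2))

/-- The positive roots of type `A_n`, modelled as pairs `(i,j)` with `1 ≤ i ≤ j ≤ n`. -/
def roots (n : ℕ) : Finset (ℕ × ℕ) :=
  ((Finset.Icc 1 n) ×ˢ (Finset.Icc 1 n)).filter (fun p => p.1 ≤ p.2)

/-- `Γ` is an antichain in `Δ⁺(A_n)`: a set of pairwise incomparable positive roots. -/
def IsAC (n : ℕ) (Γ : Finset (ℕ × ℕ)) : Prop :=
  Γ ⊆ roots n ∧ ∀ p ∈ Γ, ∀ q ∈ Γ, rle p q → p = q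

/-- The upper ideal `I(Γ) = {x ∈ Δ⁺ : ∃ γ ∈ Γ, γ ≼ x}` generated by `Γ`. -/
def upIdeal (n : ℕ) (Γ : Finset (ℕ × ℕ)) : Finset (ℕ × ℕ) :=
  (roots n).filter (fun x => ∃ γ ∈ Γ, rle γ x)

/-- The set of maximal elements of `S` with respect to the root order. -/
def maxOf (S : Finset (ℕ × ℕ)) : Finset (ℕ × ℕ) :=
  S.filter (fun x => ∀ y ∈ S, rle x y → y = x)

/-- The set of minimal elements of `S` with respect to the root order. -/
def minOf (S : Finset (ℕ × ℕ)) : Finset (ℕ × ℕ) :=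
  S.filter (fun x => ∀ y ∈ S, rle y x → y = x)

/-- The reverse operator `𝔛`, sending an antichain `Γ` to the set of maximal
elements of `Δ⁺ \ I(Γ)`. -/
def Xrev (n : ℕ) (Γ : Finset (ℕ × ℕ)) : Finset (ℕ × ℕ) :=
  maxOf (roots n \ upIdeal n Γ)

/-- `r_Γ(γ) = #(I(Γ) \ {γ})_min − #I(Γ)_min + 1`. -/
def rGam (n : ℕ) (Γ : Finset (ℕ × ℕ)) (γ : ℕ × ℕ) : ℤ :=
  ((minOf (upIdeal n Γ \ {γ})).card : ℤ) - ((minOf (upIdeal n Γ)).card : ℤ) + 1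

/-- The OY-number `𝒴(Γ) = Σ_{γ ∈ Γ} r_Γ(γ)`; in particular `𝒴(∅) = 0`. -/
def OY (n : ℕ) (Γ : Finset (ℕ × ℕ)) : ℤ := ∑ γ ∈ Γ, rGam n Γ γ

/- ### Auxiliary material -/

lemma rle_def {p q : ℕ × ℕ} : rle p q ↔ q.1 ≤ p.1 ∧ p.2 ≤ q.2 := Iff.rfl

lemma aux_rle_refl (p : ℕ × ℕ) : rle p p := ⟨le_rfl, le_rfl⟩

lemma aux_rle_trans {p q r : ℕ × ℕ} (h1 : rle p q) (h2 : rle q r) : rle p r :=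
  ⟨le_trans h2.1 h1.1, le_trans h1.2 h2.2⟩

lemma aux_rle_antisymm {p q : ℕ × ℕ} (h1 : rle p q) (h2 : rle q p) : p = q :=
  Prod.ext (le_antisymm h2.1 h1.1) (le_antisymm h1.2 h2.2)

lemma aux_mem_roots {n : ℕ} {p : ℕ × ℕ} :
    p ∈ roots n ↔ 1 ≤ p.1 ∧ p.1 ≤ p.2 ∧ p.2 ≤ n := by
  simp only [roots, mem_filter, mem_product, mem_Icc]
  omega

/-- Cardinality bound for a set with no two adjacent elements. -/
lemma aux_noadj_card {lo hi : ℕ} {S : Finset ℕ}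
    (hmem : ∀ x ∈ S, lo ≤ x ∧ x ≤ hi) (hadj : ∀ x ∈ S, x + 1 ∉ S) :
    S.card ≤ (hi - lo) / 2 + 1 := by
  have h : S.card ≤ (Finset.range ((hi - lo) / 2 + 1)).card := by
    apply Finset.card_le_card_of_injOn (fun x => (x - lo) / 2)
    · intro x hx
      have := hmem x hx
      simp only [Finset.mem_coe, Finset.mem_range]
      omega
    · intro x hx y hy hxy
      simp only [Finset.mem_coe] at hx hy
      simp only at hxy
      have hx' := hmem x hx
      have hy' := hmem y hy
      by_contra hne
      have hc : x + 1 = y ∨ y + 1 = x := by omega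
      rcases hc with h1 | h1
      · exact hadj x hx (h1 ▸ hy)
      · exact hadj y hy (h1 ▸ hx)
  simpa using h

/-- Unique maximal independent set in an odd-length interval. -/
lemma aux_umi : ∀ (m : ℕ) (lo : ℕ) (S : Finset ℕ),
    (∀ x ∈ S, lo ≤ x ∧ x ≤ lo + 2 * m) → (∀ x ∈ S, x + 1 ∉ S) →
    m + 1 ≤ S.card → ∀ x, x ∈ S ↔ (lo ≤ x ∧ x ≤ lo + 2 * m ∧ x % 2 = lo % 2) := by
  intro m
  induction m with
  | zero =>
    intro lo S hmem hadj hcard x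
    obtain ⟨y, hy⟩ := Finset.card_pos.mp (by omega : 0 < S.card)
    have hy' := hmem y hy
    have hyl : y = lo := by omega
    constructor
    · intro hx; have := hmem x hx; omega
    · intro hx
      have hxl : x = lo := by omega
      rw [hxl, ← hyl]
      exact hy
  | succ m ih =>
    intro lo S hmem hadj hcard x
    have hmem' : ∀ z ∈ S.filter (fun z => z ≤ lo + 2 * m), lo ≤ z ∧ z ≤ lo + 2 * m := by
      intro z hz
      rw [Finset.mem_filter] at hz
      exact ⟨(hmem z hz.1).1, hz.2⟩
    have hadj' : ∀ z ∈ S.filter (fun z => z ≤ lo + 2 * m), z + 1 ∉ S.filter (fun z => z ≤ lo + 2 * m) := by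
      intro z hz hz1
      exact hadj z (Finset.mem_filter.mp hz).1 (Finset.mem_filter.mp hz1).1
    have hsplit := Finset.card_filter_add_card_filter_not (s := S) (p := fun z => z ≤ lo + 2 * m)
    have hTsub : ∀ z ∈ S.filter (fun z => ¬ z ≤ lo + 2 * m), z = lo + 2*m + 1 ∨ z = lo + 2*m + 2 := by
      intro z hz
      rw [Finset.mem_filter] at hz
      have := hmem z hz.1
      omega
    have hTcard : (S.filter (fun z => ¬ z ≤ lo + 2 * m)).card ≤ 1 := by
      rw [Finset.card_le_one]
      intro a ha b hb
      have ha' := hTsub a ha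
      have hb' := hTsub b hb
      have haS := (Finset.mem_filter.mp ha).1
      have hbS := (Finset.mem_filter.mp hb).1
      by_contra hne
      have key : lo + 2*m + 1 ∈ S ∧ lo + 2*m + 2 ∈ S := by
        rcases ha' with h | h <;> rcases hb' with h2 | h2
        · omega
        · exact ⟨h ▸ haS, h2 ▸ hbS⟩
        · exact ⟨h2 ▸ hbS, h ▸ haS⟩
        · omega
      have := hadj _ key.1
      have he : lo + 2*m + 1 + 1 = lo + 2*m + 2 := by omega
      rw [he] at this
      exact this key.2
    have hS'le : (S.filter (fun z => z ≤ lo + 2 * m)).card ≤ m + 1 := by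
      have := aux_noadj_card hmem' hadj'
      have he : (lo + 2*m - lo) / 2 = m := by omega
      rw [he] at this
      exact this
    have hS'card : m + 1 ≤ (S.filter (fun z => z ≤ lo + 2 * m)).card := by omega
    have hiff := ih lo _ hmem' hadj' hS'card
    have htop : lo + 2*m ∈ S := by
      have := (hiff (lo + 2*m)).mpr ⟨by omega, by omega, by omega⟩
      exact (Finset.mem_filter.mp this).1
    have htop1 : lo + 2*m + 1 ∉ S := hadj _ htop
    have hT1 : (S.filter (fun z => ¬ z ≤ lo + 2 * m)).card = 1 := by omega
    have htop2 : lo + 2*m + 2 ∈ S := by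
      obtain ⟨a, ha⟩ := Finset.card_eq_one.mp hT1
      have haT : a ∈ S.filter (fun z => ¬ z ≤ lo + 2 * m) := by
        rw [ha]; exact Finset.mem_singleton_self a
      have haS := (Finset.mem_filter.mp haT).1
      rcases hTsub a haT with h | h
      · exact absurd (h ▸ haS) htop1
      · exact h ▸ haS
    constructor
    · intro hx
      by_cases hxle : x ≤ lo + 2*m
      · have hx' : x ∈ S.filter (fun z => z ≤ lo + 2 * m) := Finset.mem_filter.mpr ⟨hx, hxle⟩
        have := (hiff x).mp hx'
        omega
      · have hx' : x ∈ S.filter (fun z => ¬ z ≤ lo + 2 * m) := Finset.mem_filter.mpr ⟨hx, hxle⟩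
        rcases hTsub x hx' with h | h
        · exact absurd (h ▸ hx) htop1
        · omega
    · intro hx
      by_cases hxle : x ≤ lo + 2*m
      · exact (Finset.mem_filter.mp ((hiff x).mpr ⟨hx.1, hxle, hx.2.2⟩)).1
      · have hxe : x = lo + 2*m + 2 := by omega
        exact hxe ▸ htop2

/-- Counting odds and evens in `Icc 1 n`. -/
lemma aux_count (n : ℕ) :
    ((Finset.Icc 1 n).filter (fun x => x % 2 = 1)).card = (n + 1) / 2 ∧
    ((Finset.Icc 1 n).filter (fun x => x % 2 = 0)).card = n / 2 := by
  induction n with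
  | zero => simp
  | succ n ih =>
    have hins : Finset.Icc 1 (n + 1) = insert (n + 1) (Finset.Icc 1 n) := by
      ext z
      simp only [Finset.mem_Icc, Finset.mem_insert]
      omega
    have hnot : (n + 1) ∉ Finset.Icc 1 n := by simp
    constructor
    · rw [hins, Finset.filter_insert]
      by_cases h : (n + 1) % 2 = 1
      · rw [if_pos h, Finset.card_insert_of_notMem (fun hc => hnot (Finset.mem_filter.mp hc).1), ih.1]
        omega
      · rw [if_neg h, ih.1]
        omega
    · rw [hins, Finset.filter_insert]
      by_cases h : (n + 1) % 2 = 0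
      · rw [if_pos h, Finset.card_insert_of_notMem (fun hc => hnot (Finset.mem_filter.mp hc).1), ih.2]
        omega
      · rw [if_neg h, ih.2]
        omega

lemma aux_filter_all {Z : Finset ℕ} {p : ℕ → Prop} [DecidablePred p]
    (h : Z.card ≤ (Z.filter p).card) : ∀ x ∈ Z, p x := by
  intro x hx
  have he := Finset.eq_of_subset_of_card_le (Finset.filter_subset p Z) h
  rw [← he] at hx
  exact (Finset.mem_filter.mp hx).2

section Core

variable {n : ℕ} {X Y : Finset ℕ}

lemma aux_dom_top (hY : Y ⊆ Finset.Icc 1 n)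
    (dom : ∀ m, (X.filter (fun x => m ≤ x)).card ≤ (Y.filter (fun y => m ≤ y)).card)
    (h : n ∈ X) : n ∈ Y := by
  have h1 : 0 < (X.filter (fun x => n ≤ x)).card :=
    Finset.card_pos.mpr ⟨n, Finset.mem_filter.mpr ⟨h, le_rfl⟩⟩
  obtain ⟨y, hy⟩ := Finset.card_pos.mp (lt_of_lt_of_le h1 (dom n))
  have hy' := Finset.mem_filter.mp hy
  have hb := Finset.mem_Icc.mp (hY hy'.1)
  have he : y = n := by
    have := hy'.2
    omega
  exact he ▸ hy'.1

lemma aux_dom_bot (hX : X ⊆ Finset.Icc 1 n) (hcard : X.card = Y.card)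
    (dom : ∀ m, (X.filter (fun x => m ≤ x)).card ≤ (Y.filter (fun y => m ≤ y)).card)
    (h1Y : 1 ∈ Y) (hk : 1 ≤ X.card) : 1 ∈ X := by
  by_contra h
  have hXf : X.filter (fun x => 2 ≤ x) = X := by
    rw [Finset.filter_eq_self]
    intro x hx
    have hb := Finset.mem_Icc.mp (hX hx)
    have : x ≠ 1 := fun he => h (he ▸ hx)
    omega
  have hsub : Y.filter (fun y => 2 ≤ y) ⊆ Y.erase 1 := by
    intro y hy
    have hy' := Finset.mem_filter.mp hy
    exact Finset.mem_erase.mpr ⟨by omega, hy'.1⟩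
  have hd := dom 2
  rw [hXf] at hd
  have h2 := Finset.card_le_card hsub
  rw [Finset.card_erase_of_mem h1Y] at h2
  omega

lemma aux_dom2 (hall : ∀ x ∈ X, 2 ≤ x) (hcard : X.card = Y.card)
    (dom : ∀ m, (X.filter (fun x => m ≤ x)).card ≤ (Y.filter (fun y => m ≤ y)).card) :
    ∀ y ∈ Y, 2 ≤ y := by
  have hXf : X.filter (fun x => 2 ≤ x) = X := Finset.filter_eq_self.mpr hall
  have hd := dom 2
  rw [hXf, hcard] at hd
  have heq := Finset.eq_of_subset_of_card_le (Finset.filter_subset _ _) hd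
  intro y hy
  rw [← heq] at hy
  exact (Finset.mem_filter.mp hy).2

/-- The core combinatorial characterization. -/
lemma aux_core (hn : 2 ≤ n)
    (hX : X ⊆ Finset.Icc 1 n) (hY : Y ⊆ Finset.Icc 1 n)
    (hcard : X.card = Y.card)
    (dom : ∀ m, (X.filter (fun x => m ≤ x)).card ≤ (Y.filter (fun y => m ≤ y)).card) :
    (X.filter (fun x => 2 ≤ x ∧ x - 1 ∉ X)).card
      + (Y.filter (fun y => y < n ∧ y + 1 ∉ Y)).card = n - 1 ↔
    ((X = (Finset.Icc 1 n).filter (fun x => x % 2 = 1) ∧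
      Y = (Finset.Icc 1 n).filter (fun x => x % 2 = 1)) ∨
     (X = (Finset.Icc 1 n).filter (fun x => x % 2 = 0) ∧
      Y = (Finset.Icc 1 n).filter (fun x => x % 2 = 0))) := by
  constructor
  · -- hard direction
    intro hLR
    set k := X.card with hk
    set L := (X.filter (fun x => 2 ≤ x ∧ x - 1 ∉ X)).card with hL
    set R := (Y.filter (fun y => y < n ∧ y + 1 ∉ Y)).card with hR
    have hkn : k ≤ n := by
      have := Finset.card_le_card hX
      rwa [Nat.card_Icc, Nat.add_sub_cancel] at this
    have hL_le_k : L ≤ k := Finset.card_filter_le _ _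
    have hR_le_k : R ≤ k := by
      rw [hcard]; exact Finset.card_filter_le _ _
    have hcomplX : ((Finset.Icc 1 n) \ X).card = n - k := by
      rw [Finset.card_sdiff_of_subset hX, Nat.card_Icc]
      omega
    have hcomplY : ((Finset.Icc 1 n) \ Y).card = n - k := by
      rw [Finset.card_sdiff_of_subset hY, Nat.card_Icc, ← hcard]
      omega
    have hL_le : L ≤ n - k := by
      rw [← hcomplX, hL]
      apply Finset.card_le_card_of_injOn (fun x => x - 1)
      · intro x hx
        have hx' := Finset.mem_filter.mp hx
        have hb := Finset.mem_Icc.mp (hX hx'.1)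
        simp only [Finset.mem_coe, Finset.mem_sdiff, Finset.mem_Icc]
        exact ⟨by omega, hx'.2.2⟩
      · intro x hx y hy hxy
        simp only [Finset.mem_coe, Finset.mem_filter] at hx hy
        simp only at hxy
        omega
    have hR_le : R ≤ n - k := by
      rw [← hcomplY, hR]
      apply Finset.card_le_card_of_injOn (fun y => y + 1)
      · intro y hy
        have hy' := Finset.mem_filter.mp hy
        have hb := Finset.mem_Icc.mp (hY hy'.1)
        simp only [Finset.mem_coe, Finset.mem_sdiff, Finset.mem_Icc]
        exact ⟨by omega, hy'.2.2⟩
      · intro x hx y hy hxy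
        simp only at hxy
        omega
    have hcase : (n = 2*k + 1 ∧ L = k ∧ R = k) ∨ (n = 2*k ∧ L = k ∧ R = k - 1) ∨
        (n = 2*k ∧ L = k - 1 ∧ R = k) ∨ (n = 2*k - 1 ∧ L = k - 1 ∧ R = k - 1 ∧ 2 ≤ k) := by
      omega
    rcases hcase with ⟨hn', hLk, hRk⟩ | ⟨hn', hLk, hRk⟩ | ⟨hn', hLk, hRk⟩ | ⟨hn', hLk, hRk, hk2⟩
    · -- Case A : n = 2k+1, L = R = k, answer : evens
      have hXall : ∀ x ∈ X, 2 ≤ x ∧ x - 1 ∉ X := aux_filter_all (by omega)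
      have hYall : ∀ y ∈ Y, y < n ∧ y + 1 ∉ Y := aux_filter_all (by rw [← hcard]; omega)
      have hXadj : ∀ x ∈ X, x + 1 ∉ X := by
        intro x hx hx1
        exact (hXall _ hx1).2 (by simpa using hx)
      have hYadj : ∀ y ∈ Y, y + 1 ∉ Y := fun y hy => (hYall y hy).2
      have hnY : n ∉ Y := fun h => by have := (hYall n h).1; omega
      have hnX : n ∉ X := fun h => hnY (aux_dom_top hY dom h)
      have h2Y : ∀ y ∈ Y, 2 ≤ y := aux_dom2 (fun x hx => (hXall x hx).1) hcard dom
      have hk1 : 1 ≤ k := by omega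
      have hXmem : ∀ x ∈ X, 2 ≤ x ∧ x ≤ 2 + 2 * (k - 1) := by
        intro x hx
        have hb := Finset.mem_Icc.mp (hX hx)
        have : x ≠ n := fun he => hnX (he ▸ hx)
        exact ⟨(hXall x hx).1, by omega⟩
      have hXiff := aux_umi (k - 1) 2 X hXmem hXadj (by omega)
      have hYmem : ∀ y ∈ Y, 2 ≤ y ∧ y ≤ 2 + 2 * (k - 1) := by
        intro y hy
        have hb := Finset.mem_Icc.mp (hY hy)
        have : y ≠ n := fun he => hnY (he ▸ hy)
        exact ⟨h2Y y hy, by omega⟩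
      have hYiff := aux_umi (k - 1) 2 Y hYmem hYadj (by omega)
      right
      constructor
      · ext x
        rw [hXiff x]
        simp only [Finset.mem_filter, Finset.mem_Icc]
        omega
      · ext x
        rw [hYiff x]
        simp only [Finset.mem_filter, Finset.mem_Icc]
        omega
    · -- Case B1 : n = 2k, L = k, R = k-1, answer : evens
      have hk1 : 1 ≤ k := by omega
      have hXall : ∀ x ∈ X, 2 ≤ x ∧ x - 1 ∉ X := aux_filter_all (by omega)
      have hXadj : ∀ x ∈ X, x + 1 ∉ X := by
        intro x hx hx1
        exact (hXall _ hx1).2 (by simpa using hx)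
      have hXmem : ∀ x ∈ X, 2 ≤ x ∧ x ≤ 2 + 2 * (k - 1) := by
        intro x hx
        have hb := Finset.mem_Icc.mp (hX hx)
        exact ⟨(hXall x hx).1, by omega⟩
      have hXiff := aux_umi (k - 1) 2 X hXmem hXadj (by omega)
      have hnX : n ∈ X := (hXiff n).mpr ⟨by omega, by omega, by omega⟩
      have hnY : n ∈ Y := aux_dom_top hY dom hnX
      have hsplit := Finset.card_filter_add_card_filter_not
        (s := Y) (p := fun y => y < n ∧ y + 1 ∉ Y)
      have hF : (Y.filter (fun y => ¬(y < n ∧ y + 1 ∉ Y))).card = 1 := by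
        rw [← hcard] at hsplit
        omega
      have hFn : Y.filter (fun y => ¬(y < n ∧ y + 1 ∉ Y)) = {n} := by
        obtain ⟨a, ha⟩ := Finset.card_eq_one.mp hF
        have hnmem : n ∈ Y.filter (fun y => ¬(y < n ∧ y + 1 ∉ Y)) :=
          Finset.mem_filter.mpr ⟨hnY, by simp⟩
        rw [ha] at hnmem ⊢
        rw [Finset.mem_singleton] at hnmem
        rw [hnmem]
      have hYgood : ∀ y ∈ Y, y ≠ n → y < n ∧ y + 1 ∉ Y := by
        intro y hy hne
        by_contra hcon
        have : y ∈ Y.filter (fun y => ¬(y < n ∧ y + 1 ∉ Y)) := Finset.mem_filter.mpr ⟨hy, hcon⟩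
        rw [hFn, Finset.mem_singleton] at this
        exact hne this
      have hYadj : ∀ y ∈ Y, y + 1 ∉ Y := by
        intro y hy hy1
        have hb := Finset.mem_Icc.mp (hY hy1)
        exact (hYgood y hy (by omega)).2 hy1
      have h2Y : ∀ y ∈ Y, 2 ≤ y := aux_dom2 (fun x hx => (hXall x hx).1) hcard dom
      have hYmem : ∀ y ∈ Y, 2 ≤ y ∧ y ≤ 2 + 2 * (k - 1) := by
        intro y hy
        have hb := Finset.mem_Icc.mp (hY hy)
        exact ⟨h2Y y hy, by omega⟩
      have hYiff := aux_umi (k - 1) 2 Y hYmem hYadj (by omega)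
      right
      constructor
      · ext x
        rw [hXiff x]
        simp only [Finset.mem_filter, Finset.mem_Icc]
        omega
      · ext x
        rw [hYiff x]
        simp only [Finset.mem_filter, Finset.mem_Icc]
        omega
    · -- Case B2 : n = 2k, L = k-1, R = k, answer : odds
      have hk1 : 1 ≤ k := by omega
      have hYall : ∀ y ∈ Y, y < n ∧ y + 1 ∉ Y := aux_filter_all (by rw [← hcard]; omega)
      have hYadj : ∀ y ∈ Y, y + 1 ∉ Y := fun y hy => (hYall y hy).2
      have hYmem : ∀ y ∈ Y, 1 ≤ y ∧ y ≤ 1 + 2 * (k - 1) := by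
        intro y hy
        have hb := Finset.mem_Icc.mp (hY hy)
        have := (hYall y hy).1
        exact ⟨hb.1, by omega⟩
      have hYiff := aux_umi (k - 1) 1 Y hYmem hYadj (by rw [← hcard]; omega)
      have h1Y : 1 ∈ Y := (hYiff 1).mpr ⟨le_rfl, by omega, rfl⟩
      have h1X : 1 ∈ X := aux_dom_bot hX hcard dom h1Y (by omega)
      have hsplit := Finset.card_filter_add_card_filter_not
        (s := X) (p := fun x => 2 ≤ x ∧ x - 1 ∉ X)
      have hF : (X.filter (fun x => ¬(2 ≤ x ∧ x - 1 ∉ X))).card = 1 := by omega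
      have hF1 : X.filter (fun x => ¬(2 ≤ x ∧ x - 1 ∉ X)) = {1} := by
        obtain ⟨a, ha⟩ := Finset.card_eq_one.mp hF
        have h1mem : 1 ∈ X.filter (fun x => ¬(2 ≤ x ∧ x - 1 ∉ X)) :=
          Finset.mem_filter.mpr ⟨h1X, by simp⟩
        rw [ha] at h1mem ⊢
        rw [Finset.mem_singleton] at h1mem
        rw [h1mem]
      have hXgood : ∀ x ∈ X, x ≠ 1 → 2 ≤ x ∧ x - 1 ∉ X := by
        intro x hx hne
        by_contra hcon
        have : x ∈ X.filter (fun x => ¬(2 ≤ x ∧ x - 1 ∉ X)) := Finset.mem_filter.mpr ⟨hx, hcon⟩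
        rw [hF1, Finset.mem_singleton] at this
        exact hne this
      have hXadj : ∀ x ∈ X, x + 1 ∉ X := by
        intro x hx hx1
        have hb := Finset.mem_Icc.mp (hX hx)
        exact (hXgood (x + 1) hx1 (by omega)).2 (by simpa using hx)
      have hnY : n ∉ Y := by
        intro h
        have := (hYiff n).mp h
        omega
      have hnX : n ∉ X := fun h => hnY (aux_dom_top hY dom h)
      have hXmem : ∀ x ∈ X, 1 ≤ x ∧ x ≤ 1 + 2 * (k - 1) := by
        intro x hx
        have hb := Finset.mem_Icc.mp (hX hx)
        have : x ≠ n := fun he => hnX (he ▸ hx)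
        exact ⟨hb.1, by omega⟩
      have hXiff := aux_umi (k - 1) 1 X hXmem hXadj (by omega)
      left
      constructor
      · ext x
        rw [hXiff x]
        simp only [Finset.mem_filter, Finset.mem_Icc]
        omega
      · ext x
        rw [hYiff x]
        simp only [Finset.mem_filter, Finset.mem_Icc]
        omega
    · -- Case C : n = 2k-1, L = R = k-1, answer : odds
      -- X side surjectivity
      have hsurjX := Finset.surj_on_of_inj_on_of_card_le
        (s := X.filter (fun x => 2 ≤ x ∧ x - 1 ∉ X)) (t := (Finset.Icc 1 n) \ X)
        (fun x _ => x - 1)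
        (by
          intro a ha
          have ha' := Finset.mem_filter.mp ha
          have hb := Finset.mem_Icc.mp (hX ha'.1)
          have hgoal : a - 1 ∈ Finset.Icc 1 n \ X := by
            rw [Finset.mem_sdiff, Finset.mem_Icc]
            exact ⟨by omega, ha'.2.2⟩
          exact hgoal)
        (by
          intro a1 a2 ha1 ha2 he
          have h1 := Finset.mem_filter.mp ha1
          have h2 := Finset.mem_filter.mp ha2
          have he' : a1 - 1 = a2 - 1 := he
          omega)
        (by rw [hcomplX]; omega)
      have hpropX : ∀ c, 1 ≤ c → c ≤ n → c ∉ X → c + 1 ∈ X := by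
        intro c h1 h2 h3
        obtain ⟨a, ha, hfa⟩ := hsurjX c (Finset.mem_sdiff.mpr ⟨Finset.mem_Icc.mpr ⟨h1, h2⟩, h3⟩)
        have ha' := Finset.mem_filter.mp ha
        have hfa' : c = a - 1 := hfa
        have : a = c + 1 := by omega
        exact this ▸ ha'.1
      have hnX : n ∈ X := by
        by_contra h
        have hmem := hpropX n (by omega) le_rfl h
        have := Finset.mem_Icc.mp (hX hmem)
        omega
      -- Y side surjectivity
      have hsurjY := Finset.surj_on_of_inj_on_of_card_le
        (s := Y.filter (fun y => y < n ∧ y + 1 ∉ Y)) (t := (Finset.Icc 1 n) \ Y)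
        (fun y _ => y + 1)
        (by
          intro a ha
          have ha' := Finset.mem_filter.mp ha
          have hb := Finset.mem_Icc.mp (hY ha'.1)
          have hgoal : a + 1 ∈ Finset.Icc 1 n \ Y := by
            rw [Finset.mem_sdiff, Finset.mem_Icc]
            exact ⟨by omega, ha'.2.2⟩
          exact hgoal)
        (by
          intro a1 a2 ha1 ha2 he
          have he' : a1 + 1 = a2 + 1 := he
          omega)
        (by rw [hcomplY]; omega)
      have hpropY : ∀ c, 1 ≤ c → c ≤ n → c ∉ Y → 2 ≤ c ∧ c - 1 ∈ Y := by
        intro c h1 h2 h3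
        obtain ⟨a, ha, hfa⟩ := hsurjY c (Finset.mem_sdiff.mpr ⟨Finset.mem_Icc.mpr ⟨h1, h2⟩, h3⟩)
        have ha' := Finset.mem_filter.mp ha
        have hb := Finset.mem_Icc.mp (hY ha'.1)
        have hfa' : c = a + 1 := hfa
        have : a = c - 1 := by omega
        exact ⟨by omega, this ▸ ha'.1⟩
      have h1Y : 1 ∈ Y := by
        by_contra h
        have := (hpropY 1 le_rfl (by omega) h).1
        omega
      have h1X : 1 ∈ X := aux_dom_bot hX hcard dom h1Y (by omega)
      have hnY : n ∈ Y := aux_dom_top hY dom hnX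
      -- complement of X
      have hCadj : ∀ c ∈ (Finset.Icc 1 n) \ X, c + 1 ∉ (Finset.Icc 1 n) \ X := by
        intro c hc hc1
        have hc' := Finset.mem_sdiff.mp hc
        have hb := Finset.mem_Icc.mp hc'.1
        have hc1' := Finset.mem_sdiff.mp hc1
        have hb1 := Finset.mem_Icc.mp hc1'.1
        exact hc1'.2 (hpropX c hb.1 hb.2 hc'.2)
      have hCmem : ∀ c ∈ (Finset.Icc 1 n) \ X, 2 ≤ c ∧ c ≤ 2 + 2 * (k - 2) := by
        intro c hc
        have hc' := Finset.mem_sdiff.mp hc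
        have hb := Finset.mem_Icc.mp hc'.1
        have hne1 : c ≠ 1 := fun he => hc'.2 (he ▸ h1X)
        have hnen : c ≠ n := fun he => hc'.2 (he ▸ hnX)
        omega
      have hCiff := aux_umi (k - 2) 2 _ hCmem hCadj (by rw [hcomplX]; omega)
      have hXeq : X = (Finset.Icc 1 n).filter (fun x => x % 2 = 1) := by
        ext x
        simp only [Finset.mem_filter, Finset.mem_Icc]
        constructor
        · intro hx
          have hb := Finset.mem_Icc.mp (hX hx)
          have hnc : x ∉ (Finset.Icc 1 n) \ X := fun h => (Finset.mem_sdiff.mp h).2 hx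
          refine ⟨⟨hb.1, hb.2⟩, ?_⟩
          by_contra hpar
          exact hnc ((hCiff x).mpr (by omega))
        · rintro ⟨⟨hb1, hb2⟩, hp⟩
          by_contra hx
          have hmem : x ∈ (Finset.Icc 1 n) \ X :=
            Finset.mem_sdiff.mpr ⟨Finset.mem_Icc.mpr ⟨hb1, hb2⟩, hx⟩
          have := (hCiff x).mp hmem
          omega
      -- complement of Y
      have hDadj : ∀ c ∈ (Finset.Icc 1 n) \ Y, c + 1 ∉ (Finset.Icc 1 n) \ Y := by
        intro c hc hc1
        have hc' := Finset.mem_sdiff.mp hc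
        have hc1' := Finset.mem_sdiff.mp hc1
        have hb1 := Finset.mem_Icc.mp hc1'.1
        have := (hpropY (c + 1) (by omega) hb1.2 hc1'.2).2
        simp only [Nat.add_sub_cancel] at this
        exact hc'.2 this
      have hDmem : ∀ c ∈ (Finset.Icc 1 n) \ Y, 2 ≤ c ∧ c ≤ 2 + 2 * (k - 2) := by
        intro c hc
        have hc' := Finset.mem_sdiff.mp hc
        have hb := Finset.mem_Icc.mp hc'.1
        have hne1 : c ≠ 1 := fun he => hc'.2 (he ▸ h1Y)
        have hnen : c ≠ n := fun he => hc'.2 (he ▸ hnY)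
        omega
      have hDiff := aux_umi (k - 2) 2 _ hDmem hDadj (by rw [hcomplY]; omega)
      have hYeq : Y = (Finset.Icc 1 n).filter (fun x => x % 2 = 1) := by
        ext x
        simp only [Finset.mem_filter, Finset.mem_Icc]
        constructor
        · intro hx
          have hb := Finset.mem_Icc.mp (hY hx)
          have hnc : x ∉ (Finset.Icc 1 n) \ Y := fun h => (Finset.mem_sdiff.mp h).2 hx
          refine ⟨⟨hb.1, hb.2⟩, ?_⟩
          by_contra hpar
          exact hnc ((hDiff x).mpr (by omega))
        · rintro ⟨⟨hb1, hb2⟩, hp⟩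
          by_contra hx
          have hmem : x ∈ (Finset.Icc 1 n) \ Y :=
            Finset.mem_sdiff.mpr ⟨Finset.mem_Icc.mpr ⟨hb1, hb2⟩, hx⟩
          have := (hDiff x).mp hmem
          omega
      exact Or.inl ⟨hXeq, hYeq⟩
  · -- easy direction : compute the value for the two configurations
    intro h
    have hcnt := aux_count n
    rcases h with ⟨hXe, hYe⟩ | ⟨hXe, hYe⟩
    · -- odds
      subst hXe hYe
      have hLf : ((Finset.Icc 1 n).filter (fun x => x % 2 = 1)).filter
          (fun x => 2 ≤ x ∧ x - 1 ∉ (Finset.Icc 1 n).filter (fun x => x % 2 = 1))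
          = ((Finset.Icc 1 n).filter (fun x => x % 2 = 1)).erase 1 := by
        ext x
        simp only [Finset.mem_filter, Finset.mem_erase, Finset.mem_Icc]
        omega
      have hRf : ((Finset.Icc 1 n).filter (fun x => x % 2 = 1)).filter
          (fun y => y < n ∧ y + 1 ∉ (Finset.Icc 1 n).filter (fun x => x % 2 = 1))
          = ((Finset.Icc 1 n).filter (fun x => x % 2 = 1)).erase n := by
        ext y
        simp only [Finset.mem_filter, Finset.mem_erase, Finset.mem_Icc]
        omega
      rw [hLf, hRf]
      have h1mem : 1 ∈ (Finset.Icc 1 n).filter (fun x => x % 2 = 1) :=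
        Finset.mem_filter.mpr ⟨Finset.mem_Icc.mpr ⟨le_rfl, by omega⟩, by norm_num⟩
      rw [Finset.card_erase_of_mem h1mem]
      by_cases hp : n % 2 = 1
      · have hnmem : n ∈ (Finset.Icc 1 n).filter (fun x => x % 2 = 1) :=
          Finset.mem_filter.mpr ⟨Finset.mem_Icc.mpr ⟨by omega, le_rfl⟩, hp⟩
        rw [Finset.card_erase_of_mem hnmem, hcnt.1]
        omega
      · have hnmem : n ∉ (Finset.Icc 1 n).filter (fun x => x % 2 = 1) :=
          fun hc => hp (Finset.mem_filter.mp hc).2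
        rw [Finset.erase_eq_of_notMem hnmem, hcnt.1]
        omega
    · -- evens
      subst hXe hYe
      have hLf : ((Finset.Icc 1 n).filter (fun x => x % 2 = 0)).filter
          (fun x => 2 ≤ x ∧ x - 1 ∉ (Finset.Icc 1 n).filter (fun x => x % 2 = 0))
          = (Finset.Icc 1 n).filter (fun x => x % 2 = 0) := by
        rw [Finset.filter_eq_self]
        intro x hx
        simp only [Finset.mem_filter, Finset.mem_Icc] at hx
        refine ⟨by omega, ?_⟩
        simp only [Finset.mem_filter, Finset.mem_Icc]
        omega
      have hRf : ((Finset.Icc 1 n).filter (fun x => x % 2 = 0)).filter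
          (fun y => y < n ∧ y + 1 ∉ (Finset.Icc 1 n).filter (fun x => x % 2 = 0))
          = ((Finset.Icc 1 n).filter (fun x => x % 2 = 0)).erase n := by
        ext y
        simp only [Finset.mem_filter, Finset.mem_erase, Finset.mem_Icc]
        omega
      rw [hLf, hRf]
      by_cases hp : n % 2 = 0
      · have hnmem : n ∈ (Finset.Icc 1 n).filter (fun x => x % 2 = 0) :=
          Finset.mem_filter.mpr ⟨Finset.mem_Icc.mpr ⟨by omega, le_rfl⟩, hp⟩
        rw [Finset.card_erase_of_mem hnmem, hcnt.2]
        omega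
      · have hnmem : n ∉ (Finset.Icc 1 n).filter (fun x => x % 2 = 0) :=
          fun hc => hp (Finset.mem_filter.mp hc).2
        rw [Finset.erase_eq_of_notMem hnmem, hcnt.2]
        omega

end Core

section Bridge

variable {n : ℕ} {Γ : Finset (ℕ × ℕ)}

lemma aux_fst_inj (hΓ : IsAC n Γ) : ∀ p ∈ Γ, ∀ q ∈ Γ, p.1 = q.1 → p = q := by
  intro p hp q hq h
  rcases le_total p.2 q.2 with h2 | h2
  · exact hΓ.2 p hp q hq ⟨h.ge, h2⟩
  · exact (hΓ.2 q hq p hp ⟨h.le, h2⟩).symm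

lemma aux_snd_inj (hΓ : IsAC n Γ) : ∀ p ∈ Γ, ∀ q ∈ Γ, p.2 = q.2 → p = q := by
  intro p hp q hq h
  rcases le_total p.1 q.1 with h1 | h1
  · exact (hΓ.2 q hq p hp ⟨h1, h.ge⟩).symm
  · exact hΓ.2 p hp q hq ⟨h1, h.le⟩

lemma aux_mem_upIdeal {x : ℕ × ℕ} :
    x ∈ upIdeal n Γ ↔ x ∈ roots n ∧ ∃ δ ∈ Γ, rle δ x := Finset.mem_filter

lemma aux_minOf_upIdeal (hΓ : IsAC n Γ) : minOf (upIdeal n Γ) = Γ := by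
  ext x
  constructor
  · intro hx
    rw [minOf, Finset.mem_filter] at hx
    obtain ⟨hxI, hmin⟩ := hx
    obtain ⟨hxr, δ, hδ, hrle⟩ := aux_mem_upIdeal.mp hxI
    have he : δ = x := hmin δ (aux_mem_upIdeal.mpr ⟨hΓ.1 hδ, δ, hδ, aux_rle_refl δ⟩) hrle
    exact he ▸ hδ
  · intro hx
    rw [minOf, Finset.mem_filter]
    refine ⟨aux_mem_upIdeal.mpr ⟨hΓ.1 hx, x, hx, aux_rle_refl x⟩, ?_⟩
    intro y hy hyx
    obtain ⟨hyr, δ, hδ, hrle⟩ := aux_mem_upIdeal.mp hy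
    have he : δ = x := hΓ.2 δ hδ x hx (aux_rle_trans hrle hyx)
    subst he
    exact aux_rle_antisymm hyx hrle

lemma aux_minOf_sdiff (hΓ : IsAC n Γ) {γ : ℕ × ℕ} (hγ : γ ∈ Γ) :
    minOf (upIdeal n Γ \ {γ}) =
      Γ.erase γ ∪ ((roots n).filter (fun x =>
        (x = (γ.1 - 1, γ.2) ∨ x = (γ.1, γ.2 + 1)) ∧ ∀ δ ∈ Γ.erase γ, ¬ rle δ x)) := by
  have hγr := aux_mem_roots.mp (hΓ.1 hγ)
  ext x
  rw [minOf, Finset.mem_filter, Finset.mem_sdiff, Finset.mem_singleton,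
    Finset.mem_union, Finset.mem_erase, Finset.mem_filter]
  constructor
  · rintro ⟨⟨hxI, hxne⟩, hmin⟩
    obtain ⟨hxr, δ, hδ, hδx⟩ := aux_mem_upIdeal.mp hxI
    by_cases hcase : ∃ δ' ∈ Γ, δ' ≠ γ ∧ rle δ' x
    · obtain ⟨δ', hδ'Γ, hδ'ne, hδ'x⟩ := hcase
      left
      have he : δ' = x := hmin δ'
        (Finset.mem_sdiff.mpr ⟨aux_mem_upIdeal.mpr ⟨hΓ.1 hδ'Γ, δ', hδ'Γ, aux_rle_refl _⟩,
          fun hc => hδ'ne (Finset.mem_singleton.mp hc)⟩) hδ'x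
      exact ⟨hxne, he ▸ hδ'Γ⟩
    · right
      push_neg at hcase
      have hγx : rle γ x := by
        by_cases h : δ = γ
        · exact h ▸ hδx
        · exact absurd hδx (hcase δ hδ h)
      have hnot : ∀ δ' ∈ Γ.erase γ, ¬ rle δ' x := by
        intro δ' hδ'
        rw [Finset.mem_erase] at hδ'
        exact hcase δ' hδ'.2 hδ'.1
      refine ⟨hxr, ?_, hnot⟩
      obtain ⟨hx1, hx12, hx2n⟩ := aux_mem_roots.mp hxr
      obtain ⟨hle1, hle2⟩ := hγx
      have key : ∀ y : ℕ × ℕ, y ∈ roots n → rle γ y → y ≠ γ → rle y x → y = x := by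
        intro y hyr hγy hyne hyx
        exact hmin y (Finset.mem_sdiff.mpr ⟨aux_mem_upIdeal.mpr ⟨hyr, γ, hγ, hγy⟩,
          fun hc => hyne (Finset.mem_singleton.mp hc)⟩) hyx
      by_cases hA : x.2 = γ.2
      · left
        have hne1 : x.1 ≠ γ.1 := fun h => hxne (Prod.ext h hA)
        have h1 : x.1 < γ.1 := lt_of_le_of_ne hle1 hne1
        by_cases h2 : x.1 = γ.1 - 1
        · exact Prod.ext h2 hA
        · exfalso
          have hy := key (γ.1 - 1, γ.2)
            (aux_mem_roots.mpr ⟨by omega, by omega, by omega⟩)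
            ⟨by simp, by simp⟩
            (by
              intro h
              rw [Prod.ext_iff] at h
              simp only at h
              omega)
            ⟨by simp; omega, by simp; omega⟩
          rw [Prod.ext_iff] at hy
          simp only at hy
          omega
      · by_cases hB : x.1 = γ.1
        · right
          have h2 : γ.2 < x.2 := lt_of_le_of_ne hle2 (fun h => hA h.symm)
          by_cases h3 : x.2 = γ.2 + 1
          · exact Prod.ext hB h3
          · exfalso
            have hy := key (γ.1, γ.2 + 1)
              (aux_mem_roots.mpr ⟨by omega, by omega, by omega⟩)
              ⟨by simp, by simp⟩
              (by
                intro h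
                rw [Prod.ext_iff] at h
                simp only at h
                omega)
              ⟨by simp; omega, by simp; omega⟩
            rw [Prod.ext_iff] at hy
            simp only at hy
            omega
        · exfalso
          have h1 : x.1 < γ.1 := lt_of_le_of_ne hle1 hB
          have h2 : γ.2 < x.2 := lt_of_le_of_ne hle2 (fun h => hA h.symm)
          have hy := key (x.1, γ.2)
            (aux_mem_roots.mpr ⟨by omega, by omega, by omega⟩)
            ⟨by simp; omega, by simp⟩
            (by
              intro h
              rw [Prod.ext_iff] at h
              simp only at h
              omega)
            ⟨by simp, by simp; omega⟩
          rw [Prod.ext_iff] at hy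
          simp only at hy
          omega
  · rintro (⟨hne, hxΓ⟩ | ⟨hxr, hxuv, hnot⟩)
    · refine ⟨⟨aux_mem_upIdeal.mpr ⟨hΓ.1 hxΓ, x, hxΓ, aux_rle_refl x⟩, hne⟩, ?_⟩
      intro y hy hyx
      obtain ⟨hyI, hyne⟩ := Finset.mem_sdiff.mp hy
      obtain ⟨hyr, δ, hδ, hδy⟩ := aux_mem_upIdeal.mp hyI
      have he : δ = x := hΓ.2 δ hδ x hxΓ (aux_rle_trans hδy hyx)
      subst he
      exact aux_rle_antisymm hyx hδy
    · have hxb := aux_mem_roots.mp hxr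
      have hγx : rle γ x := by
        rcases hxuv with h | h <;> subst h <;> rw [rle_def]
        · exact ⟨by simp, by simp⟩
        · exact ⟨by simp, by simp⟩
      have hxneγ : x ≠ γ := by
        rcases hxuv with h | h <;> subst h <;> intro he <;> rw [Prod.ext_iff] at he <;>
          simp only at he <;> simp only at hxb <;> omega
      refine ⟨⟨aux_mem_upIdeal.mpr ⟨hxr, γ, hγ, hγx⟩, hxneγ⟩, ?_⟩
      intro y hy hyx
      obtain ⟨hyI, hyne⟩ := Finset.mem_sdiff.mp hy
      obtain ⟨hyr, δ, hδ, hδy⟩ := aux_mem_upIdeal.mp hyI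
      have hδγ : δ = γ := by
        by_contra hne'
        exact hnot δ (Finset.mem_erase.mpr ⟨hne', hδ⟩) (aux_rle_trans hδy hyx)
      rw [hδγ] at hδy
      have hyb := aux_mem_roots.mp hyr
      rw [rle_def] at hδy hyx
      have hyne2 : ¬(y.1 = γ.1 ∧ y.2 = γ.2) := fun hc =>
        hyne (Finset.mem_singleton.mpr (Prod.ext hc.1 hc.2))
      rcases hxuv with h | h <;> subst h <;> rw [Prod.ext_iff] <;>
        simp only at hxb hyx ⊢ <;> omega

lemma aux_cset_card (hΓ : IsAC n Γ) {γ : ℕ × ℕ} (hγ : γ ∈ Γ) :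
    ((roots n).filter (fun x =>
      (x = (γ.1 - 1, γ.2) ∨ x = (γ.1, γ.2 + 1)) ∧ ∀ δ ∈ Γ.erase γ, ¬ rle δ x)).card
    = (if 2 ≤ γ.1 ∧ γ.1 - 1 ∉ Γ.image Prod.fst then 1 else 0)
      + (if γ.2 < n ∧ γ.2 + 1 ∉ Γ.image Prod.snd then 1 else 0) := by
  have hγr := aux_mem_roots.mp (hΓ.1 hγ)
  have hmem : ∀ x : ℕ × ℕ, (x ∈ (roots n).filter (fun x =>
      (x = (γ.1 - 1, γ.2) ∨ x = (γ.1, γ.2 + 1)) ∧ ∀ δ ∈ Γ.erase γ, ¬ rle δ x)) ↔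
      ((x = (γ.1 - 1, γ.2) ∧ (2 ≤ γ.1 ∧ γ.1 - 1 ∉ Γ.image Prod.fst)) ∨
       (x = (γ.1, γ.2 + 1) ∧ (γ.2 < n ∧ γ.2 + 1 ∉ Γ.image Prod.snd))) := by
    intro x
    rw [Finset.mem_filter]
    constructor
    · rintro ⟨hxr, huv, hnot⟩
      rcases huv with h | h
      · left
        subst h
        have hb := aux_mem_roots.mp hxr
        simp only at hb
        refine ⟨rfl, by omega, ?_⟩
        intro hmemX
        obtain ⟨δ, hδ, hδ1⟩ := Finset.mem_image.mp hmemX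
        have hδne : δ ≠ γ := fun he => by rw [he] at hδ1; omega
        have hδ2 : δ.2 ≤ γ.2 := by
          by_contra hlt
          exact hδne (hΓ.2 γ hγ δ hδ (by rw [rle_def]; exact ⟨by omega, by omega⟩)).symm
        exact hnot δ (Finset.mem_erase.mpr ⟨hδne, hδ⟩)
          (by rw [rle_def]; exact ⟨by simp; omega, by simp; omega⟩)
      · right
        subst h
        have hb := aux_mem_roots.mp hxr
        simp only at hb
        refine ⟨rfl, by omega, ?_⟩
        intro hmemY
        obtain ⟨δ, hδ, hδ2⟩ := Finset.mem_image.mp hmemY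
        have hδne : δ ≠ γ := fun he => by rw [he] at hδ2; omega
        have hδ1 : γ.1 < δ.1 := by
          by_contra hlt
          exact hδne (hΓ.2 γ hγ δ hδ (by rw [rle_def]; exact ⟨by omega, by omega⟩)).symm
        exact hnot δ (Finset.mem_erase.mpr ⟨hδne, hδ⟩)
          (by rw [rle_def]; exact ⟨by simp; omega, by simp; omega⟩)
    · rintro (⟨h, h2, hni⟩ | ⟨h, h2, hni⟩)
      · subst h
        refine ⟨aux_mem_roots.mpr (by simp; omega), Or.inl rfl, ?_⟩
        intro δ hδ hrle
        rw [Finset.mem_erase] at hδ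
        rw [rle_def] at hrle
        simp only at hrle
        by_cases hc : γ.1 ≤ δ.1
        · exact hδ.1 (hΓ.2 δ hδ.2 γ hγ (by rw [rle_def]; exact ⟨hc, hrle.2⟩))
        · exact hni (Finset.mem_image.mpr ⟨δ, hδ.2, by omega⟩)
      · subst h
        refine ⟨aux_mem_roots.mpr (by simp; omega), Or.inr rfl, ?_⟩
        intro δ hδ hrle
        rw [Finset.mem_erase] at hδ
        rw [rle_def] at hrle
        simp only at hrle
        by_cases hc : δ.2 ≤ γ.2
        · exact hδ.1 (hΓ.2 δ hδ.2 γ hγ (by rw [rle_def]; exact ⟨by omega, hc⟩))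
        · exact hni (Finset.mem_image.mpr ⟨δ, hδ.2, by omega⟩)
  have hune : ((γ.1 - 1, γ.2) : ℕ × ℕ) ≠ (γ.1, γ.2 + 1) := by
    intro h
    rw [Prod.ext_iff] at h
    simp only at h
    omega
  by_cases h1 : 2 ≤ γ.1 ∧ γ.1 - 1 ∉ Γ.image Prod.fst <;>
    by_cases h2 : γ.2 < n ∧ γ.2 + 1 ∉ Γ.image Prod.snd
  · have he : (roots n).filter (fun x =>
        (x = (γ.1 - 1, γ.2) ∨ x = (γ.1, γ.2 + 1)) ∧ ∀ δ ∈ Γ.erase γ, ¬ rle δ x)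
        = {(γ.1 - 1, γ.2), (γ.1, γ.2 + 1)} := by
      ext x
      rw [hmem x, Finset.mem_insert, Finset.mem_singleton]
      tauto
    rw [he, Finset.card_pair hune, if_pos h1, if_pos h2]
  · have he : (roots n).filter (fun x =>
        (x = (γ.1 - 1, γ.2) ∨ x = (γ.1, γ.2 + 1)) ∧ ∀ δ ∈ Γ.erase γ, ¬ rle δ x)
        = {(γ.1 - 1, γ.2)} := by
      ext x
      rw [hmem x, Finset.mem_singleton]
      tauto
    rw [he, Finset.card_singleton, if_pos h1, if_neg h2]
  · have he : (roots n).filter (fun x =>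
        (x = (γ.1 - 1, γ.2) ∨ x = (γ.1, γ.2 + 1)) ∧ ∀ δ ∈ Γ.erase γ, ¬ rle δ x)
        = {(γ.1, γ.2 + 1)} := by
      ext x
      rw [hmem x, Finset.mem_singleton]
      tauto
    rw [he, Finset.card_singleton, if_neg h1, if_pos h2]
  · have he : (roots n).filter (fun x =>
        (x = (γ.1 - 1, γ.2) ∨ x = (γ.1, γ.2 + 1)) ∧ ∀ δ ∈ Γ.erase γ, ¬ rle δ x)
        = ∅ := by
      ext x
      rw [hmem x]
      simp only [Finset.notMem_empty, iff_false]
      tauto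
    rw [he, Finset.card_empty, if_neg h1, if_neg h2]

lemma aux_rGam (hΓ : IsAC n Γ) {γ : ℕ × ℕ} (hγ : γ ∈ Γ) :
    rGam n Γ γ = (if 2 ≤ γ.1 ∧ γ.1 - 1 ∉ Γ.image Prod.fst then (1 : ℤ) else 0)
      + (if γ.2 < n ∧ γ.2 + 1 ∉ Γ.image Prod.snd then (1 : ℤ) else 0) := by
  have hdisj : Disjoint (Γ.erase γ) ((roots n).filter (fun x =>
      (x = (γ.1 - 1, γ.2) ∨ x = (γ.1, γ.2 + 1)) ∧ ∀ δ ∈ Γ.erase γ, ¬ rle δ x)) := by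
    rw [Finset.disjoint_left]
    intro x hx hx'
    exact (Finset.mem_filter.mp hx').2.2 x hx (aux_rle_refl x)
  have hpos : 1 ≤ Γ.card := Finset.card_pos.mpr ⟨γ, hγ⟩
  rw [rGam, aux_minOf_upIdeal hΓ, aux_minOf_sdiff hΓ hγ,
    Finset.card_union_of_disjoint hdisj, aux_cset_card hΓ hγ, Finset.card_erase_of_mem hγ]
  by_cases h1 : 2 ≤ γ.1 ∧ γ.1 - 1 ∉ Γ.image Prod.fst <;>
    by_cases h2 : γ.2 < n ∧ γ.2 + 1 ∉ Γ.image Prod.snd <;>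
    simp only [if_pos, if_neg, h1, h2, if_true, if_false] <;>
    push_cast <;> omega

lemma aux_OY (hΓ : IsAC n Γ) :
    OY n Γ = ((((Γ.image Prod.fst).filter
        (fun x => 2 ≤ x ∧ x - 1 ∉ Γ.image Prod.fst)).card : ℤ)
      + (((Γ.image Prod.snd).filter
        (fun y => y < n ∧ y + 1 ∉ Γ.image Prod.snd)).card : ℤ)) := by
  rw [OY, Finset.sum_congr rfl (fun γ hγ => aux_rGam hΓ hγ), Finset.sum_add_distrib]
  congr 1
  · rw [Finset.sum_boole]
    congr 1
    rw [Finset.filter_image]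
    rw [Finset.card_image_of_injOn]
    intro p hp q hq he
    simp only [Finset.coe_filter, Set.mem_setOf_eq] at hp hq
    exact aux_fst_inj hΓ p hp.1 q hq.1 he
  · rw [Finset.sum_boole]
    congr 1
    rw [Finset.filter_image]
    rw [Finset.card_image_of_injOn]
    intro p hp q hq he
    simp only [Finset.coe_filter, Set.mem_setOf_eq] at hp hq
    exact aux_snd_inj hΓ p hp.1 q hq.1 he

end Bridge

section Final

variable {n : ℕ} {Γ : Finset (ℕ × ℕ)}

lemma aux_diag (hΓ : IsAC n Γ) (h : Γ.image Prod.fst = Γ.image Prod.snd) :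
    ∀ γ ∈ Γ, γ.1 = γ.2 := by
  have h1 : ∑ x ∈ Γ.image Prod.fst, x = ∑ γ ∈ Γ, γ.1 := Finset.sum_image (aux_fst_inj hΓ)
  have h2 : ∑ x ∈ Γ.image Prod.snd, x = ∑ γ ∈ Γ, γ.2 := Finset.sum_image (aux_snd_inj hΓ)
  have hsum : ∑ γ ∈ Γ, γ.1 = ∑ γ ∈ Γ, γ.2 := by rw [← h1, h, h2]
  exact (Finset.sum_eq_sum_iff_of_le
    (fun δ hδ => (aux_mem_roots.mp (hΓ.1 hδ)).2.1)).mp hsum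

lemma aux_conc (hΓ : IsAC n Γ) (r : ℕ)
    (hXe : Γ.image Prod.fst = (Finset.Icc 1 n).filter (fun x => x % 2 = r))
    (hYe : Γ.image Prod.snd = (Finset.Icc 1 n).filter (fun x => x % 2 = r)) :
    Γ = (roots n).filter (fun p => p.1 = p.2 ∧ p.1 % 2 = r) := by
  have hdiag := aux_diag hΓ (hXe.trans hYe.symm)
  ext p
  rw [Finset.mem_filter]
  constructor
  · intro hp
    refine ⟨hΓ.1 hp, hdiag p hp, ?_⟩
    have hmem : p.1 ∈ Γ.image Prod.fst := Finset.mem_image_of_mem _ hp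
    rw [hXe] at hmem
    exact (Finset.mem_filter.mp hmem).2
  · rintro ⟨hpr, hpd, hpo⟩
    have hb := aux_mem_roots.mp hpr
    have hmem : p.1 ∈ Γ.image Prod.fst := by
      rw [hXe]
      exact Finset.mem_filter.mpr ⟨Finset.mem_Icc.mpr ⟨hb.1, by omega⟩, hpo⟩
    obtain ⟨γ, hγ, hγ1⟩ := Finset.mem_image.mp hmem
    have hγd := hdiag γ hγ
    have he : γ = p := Prod.ext hγ1 (by omega)
    exact he ▸ hγ

lemma aux_image_fst (n r : ℕ) :
    ((roots n).filter (fun p => p.1 = p.2 ∧ p.1 % 2 = r)).image Prod.fst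
      = (Finset.Icc 1 n).filter (fun x => x % 2 = r) := by
  ext x
  simp only [Finset.mem_image, Finset.mem_filter, Finset.mem_Icc]
  constructor
  · rintro ⟨p, ⟨hpr, hpd, hpo⟩, rfl⟩
    have hb := aux_mem_roots.mp hpr
    exact ⟨⟨hb.1, by omega⟩, hpo⟩
  · rintro ⟨⟨h1, h2⟩, hp⟩
    exact ⟨(x, x), ⟨aux_mem_roots.mpr ⟨h1, le_rfl, h2⟩, rfl, hp⟩, rfl⟩

lemma aux_image_snd (n r : ℕ) :
    ((roots n).filter (fun p => p.1 = p.2 ∧ p.1 % 2 = r)).image Prod.snd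
      = (Finset.Icc 1 n).filter (fun x => x % 2 = r) := by
  ext x
  simp only [Finset.mem_image, Finset.mem_filter, Finset.mem_Icc]
  constructor
  · rintro ⟨p, ⟨hpr, hpd, hpo⟩, rfl⟩
    have hb := aux_mem_roots.mp hpr
    exact ⟨⟨by omega, hb.2.2⟩, by omega⟩
  · rintro ⟨⟨h1, h2⟩, hp⟩
    exact ⟨(x, x), ⟨aux_mem_roots.mpr ⟨h1, le_rfl, h2⟩, rfl, hp⟩, rfl⟩

end Final

/-- For an antichain `Γ` in `Δ⁺(A_n)` with `n ≥ 2`, `𝒴(Γ) = n − 1` iff `Γ` is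
the set of simple roots `α_i = (i,i)` with odd `i`, or the set of simple roots
with even `i`. -/
theorem stmt8 (n : ℕ) (hn : 2 ≤ n) (Γ : Finset (ℕ × ℕ)) (hΓ : IsAC n Γ) :
    OY n Γ = (n : ℤ) - 1 ↔
      (Γ = (roots n).filter (fun p => p.1 = p.2 ∧ Odd p.1) ∨
       Γ = (roots n).filter (fun p => p.1 = p.2 ∧ Even p.1)) := by
  have hoddeq : (roots n).filter (fun p => p.1 = p.2 ∧ Odd p.1)
      = (roots n).filter (fun p => p.1 = p.2 ∧ p.1 % 2 = 1) := by
    ext p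
    simp only [Finset.mem_filter, Nat.odd_iff]
  have heveneq : (roots n).filter (fun p => p.1 = p.2 ∧ Even p.1)
      = (roots n).filter (fun p => p.1 = p.2 ∧ p.1 % 2 = 0) := by
    ext p
    simp only [Finset.mem_filter, Nat.even_iff]
  have hXsub : Γ.image Prod.fst ⊆ Finset.Icc 1 n := by
    intro x hx
    obtain ⟨γ, hγ, rfl⟩ := Finset.mem_image.mp hx
    have hb := aux_mem_roots.mp (hΓ.1 hγ)
    rw [Finset.mem_Icc]
    omega
  have hYsub : Γ.image Prod.snd ⊆ Finset.Icc 1 n := by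
    intro x hx
    obtain ⟨γ, hγ, rfl⟩ := Finset.mem_image.mp hx
    have hb := aux_mem_roots.mp (hΓ.1 hγ)
    rw [Finset.mem_Icc]
    omega
  have hXcard : (Γ.image Prod.fst).card = Γ.card :=
    Finset.card_image_of_injOn
      (fun p hp q hq he => aux_fst_inj hΓ p (Finset.mem_coe.mp hp) q (Finset.mem_coe.mp hq) he)
  have hYcard : (Γ.image Prod.snd).card = Γ.card :=
    Finset.card_image_of_injOn
      (fun p hp q hq he => aux_snd_inj hΓ p (Finset.mem_coe.mp hp) q (Finset.mem_coe.mp hq) he)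
  have hdom : ∀ m, ((Γ.image Prod.fst).filter (fun x => m ≤ x)).card
      ≤ ((Γ.image Prod.snd).filter (fun y => m ≤ y)).card := by
    intro m
    rw [Finset.filter_image, Finset.card_image_of_injOn (fun p hp q hq he => by
      simp only [Finset.coe_filter, Set.mem_setOf_eq] at hp hq
      exact aux_fst_inj hΓ p hp.1 q hq.1 he)]
    apply Finset.card_le_card_of_injOn Prod.snd
    · intro γ hγ'
      have h' := Finset.mem_filter.mp hγ'
      refine Finset.mem_filter.mpr ⟨Finset.mem_image_of_mem _ h'.1, ?_⟩
      have hb := aux_mem_roots.mp (hΓ.1 h'.1)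
      have := h'.2
      omega
    · intro p hp q hq he
      simp only [Finset.coe_filter, Set.mem_setOf_eq] at hp hq
      exact aux_snd_inj hΓ p hp.1 q hq.1 he
  have hcore := aux_core hn hXsub hYsub (hXcard.trans hYcard.symm) hdom
  rw [aux_OY hΓ, hoddeq, heveneq]
  set L := ((Γ.image Prod.fst).filter
    (fun x => 2 ≤ x ∧ x - 1 ∉ Γ.image Prod.fst)).card with hLdef
  set R := ((Γ.image Prod.snd).filter
    (fun y => y < n ∧ y + 1 ∉ Γ.image Prod.snd)).card with hRdef
  constructor
  · intro h
    have hLR : L + R = n - 1 := by omega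
    rcases hcore.mp hLR with ⟨hXe, hYe⟩ | ⟨hXe, hYe⟩
    · exact Or.inl (aux_conc hΓ 1 hXe hYe)
    · exact Or.inr (aux_conc hΓ 0 hXe hYe)
  · intro h
    have hLR : L + R = n - 1 := by
      rcases h with h | h
      · apply hcore.mpr
        left
        constructor
        · rw [h, aux_image_fst n 1]
        · rw [h, aux_image_snd n 1]
      · apply hcore.mpr
        right
        constructor
        · rw [h, aux_image_fst n 0]
        · rw [h, aux_image_snd n 0]
    omega
end

section
/- For the poset Δ⁺ of positive roots of type A_n (n ≥ 2), the reverse operator interchanges the two alternating sets of simple roots: 𝔛({α_i : i odd, 1 ≤ i ≤ n}) = {α_i : i even, 1 ≤ i ≤ n} and 𝔛({α_i : i even, 1 ≤ i ≤ n}) = {α_i : i odd, 1 ≤ i ≤ n}; in particular these two antichains form an 𝔛-orbit of cardinality 2. -/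
open Finset

lemma mem_roots {n : ℕ} {p : ℕ × ℕ} :
    p ∈ roots n ↔ (1 ≤ p.1 ∧ p.1 ≤ p.2 ∧ p.2 ≤ n) := by
  simp only [roots, Finset.mem_filter, Finset.mem_product, Finset.mem_Icc]
  constructor
  · rintro ⟨⟨⟨h1, _⟩, ⟨_, h4⟩⟩, h5⟩
    exact ⟨h1, h5, h4⟩
  · rintro ⟨h1, h2, h3⟩
    exact ⟨⟨⟨h1, le_trans h2 h3⟩, ⟨le_trans h1 h2, h3⟩⟩, h2⟩

lemma Xrev_diag (n : ℕ) (P Q : ℕ → Prop) [DecidablePred P] [DecidablePred Q]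
    (hPQ : ∀ k, Q k ↔ ¬ P k) (hstep : ∀ k, P k ∨ P (k + 1)) :
    Xrev n ((roots n).filter (fun p => p.1 = p.2 ∧ P p.1))
      = (roots n).filter (fun p => p.1 = p.2 ∧ Q p.1) := by
  have hsd : roots n \ upIdeal n ((roots n).filter (fun p => p.1 = p.2 ∧ P p.1))
      = (roots n).filter (fun p => p.1 = p.2 ∧ Q p.1) := by
    rw [upIdeal, ← Finset.filter_not]
    apply Finset.filter_congr
    intro x hx
    rw [mem_roots] at hx
    obtain ⟨h1, h2, h3⟩ := hx
    have hex : (∃ γ ∈ (roots n).filter (fun p => p.1 = p.2 ∧ P p.1), rle γ x)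
        ↔ ∃ k, P k ∧ x.1 ≤ k ∧ k ≤ x.2 := by
      constructor
      · rintro ⟨γ, hγ, ha, hb⟩
        rw [Finset.mem_filter] at hγ
        exact ⟨γ.1, hγ.2.2, ha, by omega⟩
      · rintro ⟨k, hk, ha, hb⟩
        exact ⟨(k, k), Finset.mem_filter.2 ⟨mem_roots.2 ⟨by omega, le_refl _, by omega⟩,
          rfl, hk⟩, ha, hb⟩
    rw [hex]
    constructor
    · intro hne
      push_neg at hne
      have hx1 : ¬ P x.1 := fun h => by
        have := hne x.1 h
        omega
      have : x.1 = x.2 := by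
        rcases hstep x.1 with h | h
        · exact absurd h hx1
        · have := hne (x.1 + 1) h
          omega
      exact ⟨this, (hPQ x.1).2 hx1⟩
    · rintro ⟨heq, hq⟩ ⟨k, hk, ha, hb⟩
      have hk1 : k = x.1 := by omega
      exact (hPQ x.1).1 hq (hk1 ▸ hk)
  rw [Xrev, hsd, maxOf]
  apply Finset.filter_true_of_mem
  intro x hx y hy hle
  rw [Finset.mem_filter] at hx hy
  obtain ⟨_, hx1, _⟩ := hx
  obtain ⟨_, hy1, _⟩ := hy
  obtain ⟨ha, hb⟩ := hle
  have h1 : x.1 = y.1 := le_antisymm (by omega) ha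
  exact Prod.ext h1.symm (by omega)

/-- For `Δ⁺(A_n)` with `n ≥ 2`, the reverse operator interchanges the antichain
of simple roots with odd indices and the antichain of simple roots with even
indices; in particular these two antichains form an `𝔛`-orbit of cardinality 2. -/
theorem stmt9 (n : ℕ) (hn : 2 ≤ n) :
    Xrev n ((roots n).filter (fun p => p.1 = p.2 ∧ Odd p.1))
      = (roots n).filter (fun p => p.1 = p.2 ∧ Even p.1) ∧
    Xrev n ((roots n).filter (fun p => p.1 = p.2 ∧ Even p.1))
      = (roots n).filter (fun p => p.1 = p.2 ∧ Odd p.1) ∧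
    (roots n).filter (fun p => p.1 = p.2 ∧ Odd p.1)
      ≠ (roots n).filter (fun p => p.1 = p.2 ∧ Even p.1) := by
  refine ⟨Xrev_diag n Odd Even (fun k => Nat.not_odd_iff_even.symm)
      (fun k => ((Nat.even_or_odd k).symm).imp id Even.add_one),
    Xrev_diag n Even Odd (fun k => Nat.not_even_iff_odd.symm)
      (fun k => (Nat.even_or_odd k).imp id Odd.add_one), ?_⟩
  intro h
  have h1 : ((1 : ℕ), (1 : ℕ)) ∈ (roots n).filter (fun p => p.1 = p.2 ∧ Odd p.1) :=
    Finset.mem_filter.2 ⟨mem_roots.2 ⟨le_refl _, le_refl _, by omega⟩, rfl, odd_one⟩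
  rw [h, Finset.mem_filter] at h1
  exact (Nat.not_odd_iff_even.2 h1.2.2) odd_one
end
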